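/- arXiv:0707.1074 — 3 statements merged into one kernel-verified Lean document; each statement's English description precedes it below -/
import Mathlib

section
/- Let G₁ = (S₁, L₁, H₁) and G₂ = (S₂, L₂, H₂) be n-channel open quantum systems (so S₂ is unitary: S₂†S₂ = S₂S₂† = I), and let X be any bounded operator. Then the generator of the series product G₂ ◁ G₁ satisfies 𝒢_{G₂◁G₁}(X) = 𝓛_{L₁}(X) + 𝓛_{L₂}(X) + L₁†(S₂†XS₂ − X)L₁ + L₁†S₂†[X, L₂] + [L₂†, X]S₂L₁ − i[X, H₁ + H₂], where L₁†(S₂†XS₂ − X)L₁ = Σ_{j,l} (L₁)_j* ( Σ_k (S₂)_{kj}* X (S₂)_{kl} − δ_{jl} X ) (L₁)_l, L₁†S₂†[X, L₂] = Σ_{j,k} (L₁)_j* (S₂)_{kj}* [X, (L₂)_k], and [L₂†, X]S₂L₁ = Σ_{j,k} [(L₂)_j*, X] (S₂)_{jk} (L₁)_k. -/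
noncomputable section

open Finset

variable {E : Type*} [NormedAddCommGroup E] [InnerProductSpace ℂ E] [CompleteSpace E]

/-- The Lindblad superoperator `𝓛_L(X) = (1/2) Σ_j (L_j* [X, L_j] + [L_j*, X] L_j)`. -/
def lindblad {ι : Type*} [Fintype ι] (L : ι → E →L[ℂ] E) (X : E →L[ℂ] E) : E →L[ℂ] E :=
  (2 : ℂ)⁻¹ • ∑ j, (star (L j) * ⁅X, L j⁆ + ⁅star (L j), X⁆ * L j)

/-- `Im{A} = (A - A*)/(2i)`. -/
def imOp (A : E →L[ℂ] E) : E →L[ℂ] E := (2 * Complex.I)⁻¹ • (A - star A)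

lemma lindblad_eq {ι : Type*} [Fintype ι] (L : ι → E →L[ℂ] E) (X : E →L[ℂ] E) :
    lindblad L X = (∑ j, star (L j) * X * L j)
      - (2 : ℂ)⁻¹ • ((∑ j, star (L j) * L j) * X + X * ∑ j, star (L j) * L j) := by
  unfold lindblad
  have h : ∀ j : ι, star (L j) * ⁅X, L j⁆ + ⁅star (L j), X⁆ * L j
      = (2 : ℂ) • (star (L j) * X * L j) - (star (L j) * L j * X + X * (star (L j) * L j)) := by
    intro j
    simp only [Ring.lie_def, mul_sub, sub_mul, mul_assoc, two_smul]
    abel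
  rw [Finset.sum_congr rfl (fun j _ => h j)]
  rw [Finset.sum_sub_distrib, Finset.sum_add_distrib, ← Finset.smul_sum, ← Finset.sum_mul,
    ← Finset.mul_sum]
  rw [smul_sub, smul_smul]
  norm_num

set_option maxHeartbeats 1000000 in
/-- the generator of the series product `G₂ ◁ G₁` of two `n`-channel open
quantum systems `G₁ = (S₁, L₁, H₁)`, `G₂ = (S₂, L₂, H₂)` satisfies
`𝒢_{G₂◁G₁}(X) = 𝓛_{L₁}(X) + 𝓛_{L₂}(X) + L₁†(S₂†XS₂ − X)L₁ + L₁†S₂†[X, L₂]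
  + [L₂†, X]S₂L₁ − i[X, H₁ + H₂]`.
Here `G₂ ◁ G₁ = (S₂S₁, L₂ + S₂L₁, H₁ + H₂ + Im{L₂†S₂L₁})`, and the generator of
`(S, L, H)` is `𝒢(X) = -i[X,H] + 𝓛_L(X)`. -/
theorem stmt_1 {n : ℕ}
    (S₁ S₂ : Matrix (Fin n) (Fin n) (E →L[ℂ] E))
    (L₁ L₂ : Fin n → E →L[ℂ] E) (H₁ H₂ : E →L[ℂ] E)
    (hS₁ : S₁.conjTranspose * S₁ = 1 ∧ S₁ * S₁.conjTranspose = 1)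
    (hS₂ : S₂.conjTranspose * S₂ = 1 ∧ S₂ * S₂.conjTranspose = 1)
    (hH₁ : IsSelfAdjoint H₁) (hH₂ : IsSelfAdjoint H₂)
    (X : E →L[ℂ] E) :
    (-Complex.I) • ⁅X, H₁ + H₂ + imOp (∑ j, ∑ k, star (L₂ j) * S₂ j k * L₁ k)⁆
        + lindblad (fun j => L₂ j + ∑ k, S₂ j k * L₁ k) X
      = lindblad L₁ X + lindblad L₂ X
        + (∑ j, ∑ l, star (L₁ j) *
            ((∑ k, star (S₂ k j) * X * S₂ k l) - if j = l then X else 0) * L₁ l)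
        + (∑ j, ∑ k, star (L₁ j) * star (S₂ k j) * ⁅X, L₂ k⁆)
        + (∑ j, ∑ k, ⁅star (L₂ j), X⁆ * S₂ j k * L₁ k)
        + (-Complex.I) • ⁅X, H₁ + H₂⁆ := by
  set M : Fin n → E →L[ℂ] E := fun j => ∑ k, S₂ j k * L₁ k with hM
  set A : E →L[ℂ] E := ∑ j, star (L₂ j) * M j with hA
  have hU : ∀ k l, ∑ j, star (S₂ j k) * S₂ j l = if k = l then 1 else 0 := by
    intro k l
    have := congrFun (congrFun hS₂.1 k) l
    simpa [Matrix.mul_apply, Matrix.conjTranspose_apply, Matrix.one_apply] using this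
  have hstarM : ∀ j, star (M j) = ∑ k, star (L₁ k) * star (S₂ j k) := by
    intro j; simp [hM, star_sum]
  have hA' : star A = ∑ j, star (M j) * L₂ j := by
    simp [hA, star_sum]
  -- unitarity consequence
  have h1 : ∑ j, star (M j) * M j = ∑ k, star (L₁ k) * L₁ k := by
    calc ∑ j, star (M j) * M j
        = ∑ j, ∑ k, ∑ l, star (L₁ k) * ((star (S₂ j k) * S₂ j l) * L₁ l) := by
          refine Finset.sum_congr rfl fun j _ => ?_
          rw [hstarM, hM, Finset.sum_mul]
          refine Finset.sum_congr rfl fun k _ => ?_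
          rw [Finset.mul_sum]
          exact Finset.sum_congr rfl fun l _ => by noncomm_ring
      _ = ∑ k, ∑ l, star (L₁ k) * ((∑ j, star (S₂ j k) * S₂ j l) * L₁ l) := by
          rw [Finset.sum_comm]
          refine Finset.sum_congr rfl fun k _ => ?_
          rw [Finset.sum_comm]
          refine Finset.sum_congr rfl fun l _ => ?_
          simp only [Finset.mul_sum, Finset.sum_mul]
      _ = ∑ k, star (L₁ k) * L₁ k := by
          refine Finset.sum_congr rfl fun k _ => ?_
          rw [Finset.sum_eq_single k]
          · simp [hU]
          · intro l _ hlk; simp [hU, Ne.symm hlk]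
          · simp
  -- the gain term
  have hthird : (∑ j, ∑ l, star (L₁ j) *
        ((∑ k, star (S₂ k j) * X * S₂ k l) - if j = l then X else 0) * L₁ l)
      = (∑ k, star (M k) * X * M k) - ∑ j, star (L₁ j) * X * L₁ j := by
    have hsplit : ∀ j l : Fin n, star (L₁ j) *
          ((∑ k, star (S₂ k j) * X * S₂ k l) - if j = l then X else 0) * L₁ l
        = star (L₁ j) * (∑ k, star (S₂ k j) * X * S₂ k l) * L₁ l
          - star (L₁ j) * (if j = l then X else 0) * L₁ l := by
      intro j l; rw [mul_sub, sub_mul]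
    simp only [hsplit, Finset.sum_sub_distrib]
    congr 1
    · calc ∑ j, ∑ l, star (L₁ j) * (∑ k, star (S₂ k j) * X * S₂ k l) * L₁ l
          = ∑ j, ∑ l, ∑ k, (star (L₁ j) * star (S₂ k j)) * X * (S₂ k l * L₁ l) := by
            refine Finset.sum_congr rfl fun j _ => Finset.sum_congr rfl fun l _ => ?_
            simp only [Finset.mul_sum, Finset.sum_mul]
            exact Finset.sum_congr rfl fun k _ => by noncomm_ring
        _ = ∑ j, ∑ k, ∑ l, (star (L₁ j) * star (S₂ k j)) * X * (S₂ k l * L₁ l) :=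
            Finset.sum_congr rfl fun j _ => Finset.sum_comm
        _ = ∑ k, ∑ j, ∑ l, (star (L₁ j) * star (S₂ k j)) * X * (S₂ k l * L₁ l) :=
            Finset.sum_comm
        _ = ∑ k, star (M k) * X * M k := by
            refine Finset.sum_congr rfl fun k _ => ?_
            rw [hstarM, hM]
            simp only [Finset.mul_sum, Finset.sum_mul]
            exact Finset.sum_comm
    · refine Finset.sum_congr rfl fun j _ => ?_
      rw [Finset.sum_eq_single j]
      · simp
      · intro l _ hlj; simp [Ne.symm hlj]
      · simp
  -- the fourth term
  have hfourth : (∑ j, ∑ k, star (L₁ j) * star (S₂ k j) * ⁅X, L₂ k⁆)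
      = (∑ k, star (M k) * X * L₂ k) - star A * X := by
    calc ∑ j, ∑ k, star (L₁ j) * star (S₂ k j) * ⁅X, L₂ k⁆
        = ∑ k, (∑ j, star (L₁ j) * star (S₂ k j)) * ⁅X, L₂ k⁆ := by
          rw [Finset.sum_comm]
          exact Finset.sum_congr rfl fun k _ => by rw [Finset.sum_mul]
      _ = ∑ k, star (M k) * ⁅X, L₂ k⁆ := by
          exact Finset.sum_congr rfl fun k _ => by rw [hstarM]
      _ = (∑ k, star (M k) * X * L₂ k) - star A * X := by
          rw [hA', Finset.sum_mul, ← Finset.sum_sub_distrib]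
          refine Finset.sum_congr rfl fun k _ => ?_
          simp only [Ring.lie_def, mul_sub, mul_assoc]
  -- the fifth term
  have hfifth : (∑ j, ∑ k, ⁅star (L₂ j), X⁆ * S₂ j k * L₁ k)
      = (∑ j, star (L₂ j) * X * M j) - X * A := by
    rw [hA, Finset.mul_sum, ← Finset.sum_sub_distrib]
    refine Finset.sum_congr rfl fun j _ => ?_
    rw [hM]
    simp only [Finset.mul_sum, Ring.lie_def, sub_mul, mul_assoc, Finset.sum_sub_distrib,
      Finset.mul_sum]
  -- the composite Lindblad term
  have hL : lindblad (fun j => L₂ j + M j) X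
      = ((∑ j, star (L₂ j) * X * L₂ j) + (∑ j, star (L₂ j) * X * M j)
          + (∑ j, star (M j) * X * L₂ j) + (∑ k, star (M k) * X * M k))
        - (2 : ℂ)⁻¹ • ((((∑ j, star (L₂ j) * L₂ j) + A + star A + ∑ k, star (L₁ k) * L₁ k) * X)
            + X * ((∑ j, star (L₂ j) * L₂ j) + A + star A + ∑ k, star (L₁ k) * L₁ k)) := by
    rw [lindblad_eq]
    have e1 : ∑ j, star (L₂ j + M j) * X * (L₂ j + M j)
        = (∑ j, star (L₂ j) * X * L₂ j) + (∑ j, star (L₂ j) * X * M j)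
          + (∑ j, star (M j) * X * L₂ j) + (∑ k, star (M k) * X * M k) := by
      simp only [star_add, add_mul, mul_add, Finset.sum_add_distrib]
      abel
    have e2 : ∑ j, star (L₂ j + M j) * (L₂ j + M j)
        = (∑ j, star (L₂ j) * L₂ j) + A + star A + ∑ k, star (L₁ k) * L₁ k := by
      simp only [star_add, add_mul, mul_add, Finset.sum_add_distrib]
      rw [h1, hA, hA']
      abel
    rw [e1, e2]
  -- rewrite the imOp argument
  have hAeq : (∑ j, ∑ k, star (L₂ j) * S₂ j k * L₁ k) = A := by
    rw [hA]
    refine Finset.sum_congr rfl fun j _ => ?_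
    rw [hM, Finset.mul_sum]
    exact Finset.sum_congr rfl fun k _ => by rw [mul_assoc]
  rw [hAeq, hthird, hfourth, hfifth, hL, lindblad_eq L₁ X, lindblad_eq L₂ X]
  have hc : (-Complex.I) * (2 * Complex.I)⁻¹ = -(2:ℂ)⁻¹ := by
    rw [mul_inv, Complex.inv_I]
    ring_nf
    simp [Complex.I_sq]
    norm_num
  have hIm : (-Complex.I : ℂ) • ⁅X, imOp A⁆ = (-(2:ℂ)⁻¹) • ⁅X, A - star A⁆ := by
    rw [imOp, Ring.lie_def, Ring.lie_def, mul_smul_comm, smul_mul_assoc, ← smul_sub, smul_smul, hc]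
  have hadd : ⁅X, H₁ + H₂ + imOp A⁆ = ⁅X, H₁ + H₂⁆ + ⁅X, imOp A⁆ := by
    simp only [Ring.lie_def, mul_add, add_mul]; abel
  rw [hadd, smul_add, hIm]
  set a1 := ∑ j, star (L₁ j) * X * L₁ j with ha1
  set N₁ := ∑ k, star (L₁ k) * L₁ k with hN₁
  set a3 := ∑ j, star (L₂ j) * X * L₂ j with ha3
  set N₂ := ∑ j, star (L₂ j) * L₂ j with hN₂
  set P := ∑ k, star (M k) * X * M k with hP
  set c1 := ∑ j, star (L₂ j) * X * M j with hc1
  set c2 := ∑ k, star (M k) * X * L₂ k with hc2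
  simp only [Ring.lie_def, lie_sub, smul_sub, smul_add, mul_add, add_mul, mul_sub, sub_mul]
  module
end
end

section
/- (Positive Real Lemma, infinitesimal form.) Let L = (L_j) be an n-vector, Z_L = (Z_{L,j}) an n-vector, K = (K_k) an m-vector, and Z_K = (Z_{K,k}) an m-vector of bounded operators; let H be bounded self-adjoint, V bounded self-adjoint nonnegative, N bounded, and λ ≥ 0 a real number. Then the following are equivalent. (a) For every n-vector w = (w_j) and m-vector v = (v_k) of bounded operators such that each w_j, w_j*, v_k, v_k* commutes with each of V, H, N, N* and with each L_j, L_j*, K_k, K_k*, Z_{L,j}, Z_{L,j}*, Z_{K,k}, Z_{K,k}*, one has 𝓛_L(V) − i[V, H] + Σ_j ( w_j*([V, L_j] − Z_{L,j}) + ([L_j*, V] − Z_{L,j}*)w_j ) + Σ_k ( v_k*([V, K_k] − Z_{K,k}) + ([K_k*, V] − Z_{K,k}*)v_k ) + N*N − λ·I ≤ 0. (b) 𝓛_L(V) − i[V, H] + N*N − λ·I ≤ 0, and Z_{L,j} = [V, L_j] for every j and Z_{K,k} = [V, K_k] for every k. -/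
noncomputable section

open Finset
open scoped ComplexOrder

variable {E : Type*} [NormedAddCommGroup E] [InnerProductSpace ℂ E] [CompleteSpace E]

/-- Operator ordering: `A ≤ B` iff `⟨ψ, Aψ⟩ ≤ ⟨ψ, Bψ⟩` for all `ψ`. -/
def opLE (A B : E →L[ℂ] E) : Prop :=
  ∀ ψ : E, (inner ℂ ψ (A ψ) : ℂ) ≤ (inner ℂ ψ (B ψ) : ℂ)

/-- The set of plant variables: `V, H, N, N*` together with all `L_j, L_j*, K_k, K_k*,
Z_{L,j}, Z_{L,j}*, Z_{K,k}, Z_{K,k}*`. -/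
def plantSet {n m : ℕ} (L ZL : Fin n → E →L[ℂ] E) (K ZK : Fin m → E →L[ℂ] E)
    (Hm V N : E →L[ℂ] E) : Set (E →L[ℂ] E) :=
  {V, Hm, N, star N} ∪ Set.range L ∪ Set.range (star ∘ L)
    ∪ Set.range K ∪ Set.range (star ∘ K)
    ∪ Set.range ZL ∪ Set.range (star ∘ ZL)
    ∪ Set.range ZK ∪ Set.range (star ∘ ZK)

set_option linter.unusedSectionVars false


lemma smulOne_commute (c : ℂ) (a : E →L[ℂ] E) : Commute (c • (1 : E →L[ℂ] E)) a := by
  simp [Commute, SemiconjBy, smul_mul_assoc, mul_smul_comm]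

lemma inner_star_apply' (B : E →L[ℂ] E) (ψ : E) :
    (inner ℂ ψ ((star B) ψ) : ℂ) = starRingEnd ℂ (inner ℂ ψ (B ψ)) := by
  rw [ContinuousLinearMap.star_eq_adjoint, ContinuousLinearMap.adjoint_inner_right,
    ← inner_conj_symm]

lemma op_eq_zero_of_inner (B : E →L[ℂ] E) (h : ∀ ψ, (inner ℂ ψ (B ψ) : ℂ) = 0) : B = 0 := by
  have := (inner_map_self_eq_zero (B : E →ₗ[ℂ] E)).mp (fun x => by
    rw [← inner_conj_symm]; simp [h x])
  ext x
  have := congrFun (congrArg (fun (f : E →ₗ[ℂ] E) => f.toFun) this) x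
  simpa using this

/-- Key extraction: if for all scalars `c`, base + c̄•B + c•B* ≤ 0 pointwise, then B = 0. -/
lemma key_extract (Base B : E →L[ℂ] E)
    (h : ∀ c : ℂ, ∀ ψ : E,
      (inner ℂ ψ ((Base + (starRingEnd ℂ c • B + c • star B)) ψ) : ℂ) ≤ 0) : B = 0 := by
  apply op_eq_zero_of_inner
  intro ψ
  set b : ℂ := inner ℂ ψ (B ψ) with hb
  by_contra hbne
  have hnsq : 0 < Complex.normSq b := by
    simpa [Complex.normSq_pos] using hbne
  set r : ℝ := (inner ℂ ψ (Base ψ) : ℂ).re with hr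
  have key : ∀ t : ℝ, r + 2 * t * Complex.normSq b ≤ 0 := by
    intro t
    have h1 := h ((t : ℂ) * b) ψ
    have hexp : (inner ℂ ψ ((Base + (starRingEnd ℂ ((t:ℂ)*b) • B + ((t:ℂ)*b) • star B)) ψ) : ℂ)
        = inner ℂ ψ (Base ψ) + ((2 * t * Complex.normSq b : ℝ) : ℂ) := by
      simp only [ContinuousLinearMap.add_apply, inner_add_right,
        ContinuousLinearMap.smul_apply, inner_smul_right, inner_star_apply', ← hb]
      push_cast
      rw [map_mul, Complex.conj_ofReal]
      have h1 : (starRingEnd ℂ) b * b = (Complex.normSq b : ℂ) :=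
        (Complex.normSq_eq_conj_mul_self).symm
      have h2 : b * (starRingEnd ℂ) b = (Complex.normSq b : ℂ) := Complex.mul_conj b
      rw [mul_assoc, mul_assoc, h1, h2]
      ring
    rw [hexp] at h1
    have h2 := Complex.le_def.mp h1
    have := h2.1
    simpa [hr] using this
  have hk := key ((1 + |r|) / (2 * Complex.normSq b))
  have heq : 2 * ((1 + |r|) / (2 * Complex.normSq b)) * Complex.normSq b = 1 + |r| := by
    field_simp
  rw [heq] at hk
  have := neg_abs_le r
  linarith


/-- Positive Real Lemma, infinitesimal form: the dissipation inequality
`𝓛_L(V) − i[V,H] + Σ_j (w_j*([V,L_j] − Z_{L,j}) + ([L_j*,V] − Z_{L,j}*)w_j)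
  + Σ_k (v_k*([V,K_k] − Z_{K,k}) + ([K_k*,V] − Z_{K,k}*)v_k) + N*N − λI ≤ 0`
holds for all `w, v` (with `w_j, w_j*, v_k, v_k*` commuting with all plant variables)
iff `𝓛_L(V) − i[V,H] + N*N − λI ≤ 0`, `Z_{L,j} = [V,L_j]` and `Z_{K,k} = [V,K_k]`. -/
theorem stmt_8 {n m : ℕ}
    (L ZL : Fin n → E →L[ℂ] E) (K ZK : Fin m → E →L[ℂ] E)
    (Hm V N : E →L[ℂ] E) (lam : ℝ)
    (hHm : IsSelfAdjoint Hm) (hV : IsSelfAdjoint V)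
    (hVpos : ∀ ψ : E, 0 ≤ (inner ℂ ψ (V ψ) : ℂ))
    (hlam : 0 ≤ lam) :
    (∀ (w : Fin n → E →L[ℂ] E) (v : Fin m → E →L[ℂ] E),
        (∀ j, ∀ a ∈ plantSet L ZL K ZK Hm V N,
          Commute (w j) a ∧ Commute (star (w j)) a) →
        (∀ k, ∀ a ∈ plantSet L ZL K ZK Hm V N,
          Commute (v k) a ∧ Commute (star (v k)) a) →
        opLE (lindblad L V + (-Complex.I) • ⁅V, Hm⁆
          + (∑ j, (star (w j) * (⁅V, L j⁆ - ZL j)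
              + (⁅star (L j), V⁆ - star (ZL j)) * w j))
          + (∑ k, (star (v k) * (⁅V, K k⁆ - ZK k)
              + (⁅star (K k), V⁆ - star (ZK k)) * v k))
          + star N * N - (lam : ℂ) • 1) 0)
      ↔ (opLE (lindblad L V + (-Complex.I) • ⁅V, Hm⁆ + star N * N - (lam : ℂ) • 1) 0
          ∧ (∀ j, ZL j = ⁅V, L j⁆) ∧ (∀ k, ZK k = ⁅V, K k⁆)) := by

  have hstarB : ∀ (A Z : E →L[ℂ] E), ⁅star A, V⁆ - star Z = star (⁅V, A⁆ - Z) := by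
    intro A Z
    simp only [Ring.lie_def, star_sub, star_mul, hV.star_eq]
  constructor
  · intro h
    have hbase : opLE (lindblad L V + (-Complex.I) • ⁅V, Hm⁆ + star N * N - (lam : ℂ) • 1) 0 := by
      have h0 := h 0 0 (fun j a _ => ⟨by simpa using Commute.zero_left a,
          by simpa using Commute.zero_left a⟩)
        (fun k a _ => ⟨by simpa using Commute.zero_left a,
          by simpa using Commute.zero_left a⟩)
      simpa using h0
    refine ⟨hbase, ?_, ?_⟩
    · intro j0
      set Base : E →L[ℂ] E :=
        lindblad L V + (-Complex.I) • ⁅V, Hm⁆ + star N * N - (lam : ℂ) • 1 with hBase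
      set B : E →L[ℂ] E := ⁅V, L j0⁆ - ZL j0 with hBdef
      have hB0 : B = 0 := by
        apply key_extract Base
        intro c ψ
        set w : Fin n → E →L[ℂ] E := fun j => if j = j0 then c • 1 else 0 with hw
        have hwc : ∀ j, ∀ a ∈ plantSet L ZL K ZK Hm V N,
            Commute (w j) a ∧ Commute (star (w j)) a := by
          intro j a _
          by_cases hj : j = j0
          · constructor
            · simpa [hw, hj] using smulOne_commute c a
            · simpa [hw, hj, star_smul] using smulOne_commute (starRingEnd ℂ c) a
          · simpa [hw, hj] using ⟨Commute.zero_left a, by simpa using Commute.zero_left a⟩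
        have h1 := h w 0 hwc (fun k a _ => ⟨by simpa using Commute.zero_left a,
            by simpa using Commute.zero_left a⟩)
        have hsum : (∑ j, (star (w j) * (⁅V, L j⁆ - ZL j)
              + (⁅star (L j), V⁆ - star (ZL j)) * w j))
            = starRingEnd ℂ c • B + c • star B := by
          rw [Finset.sum_eq_single j0]
          · rw [hstarB]
            simp [hw, star_smul, smul_mul_assoc, mul_smul_comm, hBdef]
          · intro j _ hj
            simp [hw, hj]
          · intro hj
            exact absurd (Finset.mem_univ j0) hj
        have hop : lindblad L V + (-Complex.I) • ⁅V, Hm⁆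
            + (∑ j, (star (w j) * (⁅V, L j⁆ - ZL j)
                + (⁅star (L j), V⁆ - star (ZL j)) * w j))
            + (∑ k, (star ((0 : Fin m → E →L[ℂ] E) k) * (⁅V, K k⁆ - ZK k)
                + (⁅star (K k), V⁆ - star (ZK k)) * (0 : Fin m → E →L[ℂ] E) k))
            + star N * N - (lam : ℂ) • 1
            = Base + (starRingEnd ℂ c • B + c • star B) := by
          rw [hsum, hBase]
          simp only [Pi.zero_apply, star_zero, zero_mul, mul_zero, add_zero,
            Finset.sum_const_zero]
          abel
        rw [hop] at h1
        simpa using h1 ψ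
      have := sub_eq_zero.mp hB0
      exact this.symm
    · intro k0
      set Base : E →L[ℂ] E :=
        lindblad L V + (-Complex.I) • ⁅V, Hm⁆ + star N * N - (lam : ℂ) • 1 with hBase
      set B : E →L[ℂ] E := ⁅V, K k0⁆ - ZK k0 with hBdef
      have hB0 : B = 0 := by
        apply key_extract Base
        intro c ψ
        set v : Fin m → E →L[ℂ] E := fun k => if k = k0 then c • 1 else 0 with hv
        have hvc : ∀ k, ∀ a ∈ plantSet L ZL K ZK Hm V N,
            Commute (v k) a ∧ Commute (star (v k)) a := by
          intro k a _
          by_cases hk : k = k0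
          · constructor
            · simpa [hv, hk] using smulOne_commute c a
            · simpa [hv, hk, star_smul] using smulOne_commute (starRingEnd ℂ c) a
          · simpa [hv, hk] using ⟨Commute.zero_left a, by simpa using Commute.zero_left a⟩
        have h1 := h 0 v (fun j a _ => ⟨by simpa using Commute.zero_left a,
            by simpa using Commute.zero_left a⟩) hvc
        have hsum : (∑ k, (star (v k) * (⁅V, K k⁆ - ZK k)
              + (⁅star (K k), V⁆ - star (ZK k)) * v k))
            = starRingEnd ℂ c • B + c • star B := by
          rw [Finset.sum_eq_single k0]
          · rw [hstarB]
            simp [hv, star_smul, smul_mul_assoc, mul_smul_comm, hBdef]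
          · intro k _ hk
            simp [hv, hk]
          · intro hk
            exact absurd (Finset.mem_univ k0) hk
        have hop : lindblad L V + (-Complex.I) • ⁅V, Hm⁆
            + (∑ j, (star ((0 : Fin n → E →L[ℂ] E) j) * (⁅V, L j⁆ - ZL j)
                + (⁅star (L j), V⁆ - star (ZL j)) * (0 : Fin n → E →L[ℂ] E) j))
            + (∑ k, (star (v k) * (⁅V, K k⁆ - ZK k)
                + (⁅star (K k), V⁆ - star (ZK k)) * v k))
            + star N * N - (lam : ℂ) • 1
            = Base + (starRingEnd ℂ c • B + c • star B) := by
          rw [hsum, hBase]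
          simp only [Pi.zero_apply, star_zero, zero_mul, mul_zero, add_zero,
            Finset.sum_const_zero]
          abel
        rw [hop] at h1
        simpa using h1 ψ
      have := sub_eq_zero.mp hB0
      exact this.symm
  · rintro ⟨hbase, hZL, hZK⟩ w v hw hv
    have hs1 : (∑ j, (star (w j) * (⁅V, L j⁆ - ZL j)
        + (⁅star (L j), V⁆ - star (ZL j)) * w j)) = 0 := by
      apply Finset.sum_eq_zero
      intro j _
      rw [hstarB]
      simp [← hZL j]
    have hs2 : (∑ k, (star (v k) * (⁅V, K k⁆ - ZK k)
        + (⁅star (K k), V⁆ - star (ZK k)) * v k)) = 0 := by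
      apply Finset.sum_eq_zero
      intro k _
      rw [hstarB]
      simp [← hZK k]
    rw [hs1, hs2]
    simpa using hbase
end
end

section
/- Let A, B be bounded self-adjoint operators and C a bounded operator on a complex Hilbert space 𝖧. If w*Aw ≤ B + w*C + C*w for every bounded operator w on 𝖧, then A ≤ 0. -/
noncomputable section

open Finset
open scoped ComplexOrder

variable {E : Type*} [NormedAddCommGroup E] [InnerProductSpace ℂ E] [CompleteSpace E]

/-- if `A, B` are bounded self-adjoint operators and `C` is bounded, and
`w*Aw ≤ B + w*C + C*w` for every bounded operator `w`, then `A ≤ 0`. -/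
theorem stmt_13 (A B C : E →L[ℂ] E)
    (hA : IsSelfAdjoint A) (hB : IsSelfAdjoint B)
    (h : ∀ w : E →L[ℂ] E, opLE (star w * A * w) (B + star w * C + star C * w)) :
    opLE A 0 := by
  intro ψ
  -- imaginary part is zero by self-adjointness
  have hsym : (starRingEnd ℂ) (inner ℂ ψ (A ψ) : ℂ) = inner ℂ ψ (A ψ) := by
    rw [inner_conj_symm]
    exact hA.isSymmetric ψ ψ
  have him : (inner ℂ ψ (A ψ) : ℂ).im = 0 := by
    have h2 := congrArg Complex.im hsym
    rw [Complex.conj_im] at h2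
    linarith
  have key : ∀ t : ℝ, ((t : ℂ)^2 * inner ℂ ψ (A ψ) : ℂ) ≤
      inner ℂ ψ (B ψ) + (t : ℂ) * (inner ℂ ψ (C ψ) + inner ℂ ψ ((star C) ψ)) := by
    intro t
    have := h ((t : ℂ) • 1) ψ
    simp only [star_smul, star_one, ContinuousLinearMap.mul_apply,
      ContinuousLinearMap.smul_apply, ContinuousLinearMap.one_apply,
      ContinuousLinearMap.add_apply, map_smul, inner_smul_right, inner_add_right,
      Complex.conj_ofReal, RCLike.star_def] at this
    convert this using 1 <;> ring
  -- take real parts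
  set a := (inner ℂ ψ (A ψ) : ℂ).re
  set b := (inner ℂ ψ (B ψ) : ℂ).re
  set c := ((inner ℂ ψ (C ψ) : ℂ) + inner ℂ ψ ((star C) ψ)).re
  have keyR : ∀ t : ℝ, t^2 * a ≤ b + t * c := by
    intro t
    have hk := (Complex.le_def.mp (key t)).1
    simpa [Complex.add_re, Complex.mul_re, Complex.ofReal_re, Complex.ofReal_im,
      pow_two, a, b, c] using hk
  have ha : a ≤ 0 := by
    by_contra hpos
    push_neg at hpos
    set t := max 1 ((|b| + |c| + 1) / a) with ht
    have h1 := keyR t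
    have hs1 : (1:ℝ) ≤ t := le_max_left _ _
    have hsa : |b| + |c| + 1 ≤ t * a := by
      have := le_max_right 1 ((|b| + |c| + 1) / a)
      calc |b| + |c| + 1 = ((|b| + |c| + 1) / a) * a := (div_mul_cancel₀ _ (ne_of_gt hpos)).symm
        _ ≤ t * a := by nlinarith
    have hb : b ≤ |b| := le_abs_self b
    have hc : c ≤ |c| := le_abs_self c
    nlinarith [abs_nonneg b, abs_nonneg c]
  rw [Complex.le_def]
  constructor
  · simpa using ha
  · simpa using him
end
end
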